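/- arXiv:2412.15408 — 2 statements merged into one kernel-verified Lean document; each statement's English description precedes it below -/
import Mathlib

section
/- For every natural number n ≥ 1, the centered cardinal B-spline φ_n is of class C^{n−1} on ℝ (i.e. (n−1)-times continuously differentiable; in particular φ_1 is continuous). -/
open MeasureTheory

/-- The centered cardinal B-spline: `bspline 0` is the indicator of `(-1/2, 1/2)`,
and `bspline (n+1) x = ∫_{-1/2}^{1/2} bspline n (x - y) dy`. -/
noncomputable def bspline : ℕ → ℝ → ℝ
  | 0 => Set.indicator (Set.Ioo (-(1/2) : ℝ) (1/2)) (fun _ => 1)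
  | n + 1 => fun x => ∫ y in (-(1/2) : ℝ)..(1/2), bspline n (x - y)

lemma bspline_succ_eq (n : ℕ) (x : ℝ) :
    bspline (n + 1) x = ∫ t in (x - 1/2)..(x + 1/2), bspline n t := by
  show (∫ y in (-(1/2) : ℝ)..(1/2), bspline n (x - y)) = _
  rw [intervalIntegral.integral_comp_sub_left]
  norm_num

lemma bspline_eq_zero : ∀ n : ℕ, ∀ x : ℝ, ((n : ℝ) + 1) / 2 < |x| → bspline n x = 0 := by
  intro n
  induction n with
  | zero =>
    intro x hx
    have hnot : x ∉ Set.Ioo (-(1/2) : ℝ) (1/2) := by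
      intro hmem
      rw [Set.mem_Ioo] at hmem
      push_cast at hx
      linarith [abs_lt.mpr hmem]
    exact Set.indicator_of_notMem hnot _
  | succ n ih =>
    intro x hx
    rw [bspline_succ_eq]
    rw [intervalIntegral.integral_congr (g := fun _ => (0:ℝ)) ?_, intervalIntegral.integral_zero]
    intro t ht
    rw [Set.uIcc_of_le (by linarith)] at ht
    apply ih
    have h1 : |x| - |t| ≤ |x - t| := abs_sub_abs_le_abs_sub x t
    have h2 : |x - t| ≤ 1/2 := abs_le.mpr ⟨by linarith [ht.2], by linarith [ht.1]⟩
    push_cast at hx ⊢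
    linarith

lemma bspline_hasCompactSupport (n : ℕ) : HasCompactSupport (bspline n) := by
  apply HasCompactSupport.intro (isCompact_Icc (a := -(((n : ℝ) + 1)/2)) (b := ((n : ℝ) + 1)/2))
  intro x hx
  apply bspline_eq_zero
  simp only [Set.mem_Icc, not_and_or, not_le] at hx
  rcases hx with h | h
  · rw [abs_of_neg (by linarith [Nat.cast_nonneg (α := ℝ) n])]; linarith
  · rw [abs_of_pos (by linarith [Nat.cast_nonneg (α := ℝ) n])]; linarith

lemma bspline_integrable_continuous :
    ∀ n : ℕ, Integrable (bspline n) ∧ Continuous (bspline (n + 1)) := by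
  intro n
  induction n with
  | zero =>
    constructor
    · exact (integrable_indicator_iff measurableSet_Ioo).2
        (integrableOn_const measure_Ioo_lt_top.ne)
    · have hint : Integrable (bspline 0) :=
        (integrable_indicator_iff measurableSet_Ioo).2
          (integrableOn_const measure_Ioo_lt_top.ne)
      have hF := hint.continuous_primitive 0
      have : bspline 1 = fun x => (∫ t in (0:ℝ)..(x + 1/2), bspline 0 t)
          - ∫ t in (0:ℝ)..(x - 1/2), bspline 0 t := by
        funext x
        rw [bspline_succ_eq, intervalIntegral.integral_interval_sub_left
          hint.intervalIntegrable hint.intervalIntegrable]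
      rw [this]
      exact (hF.comp (continuous_id.add continuous_const)).sub
        (hF.comp (continuous_id.sub continuous_const))
  | succ n ih =>
    have hint : Integrable (bspline (n + 1)) :=
      ih.2.integrable_of_hasCompactSupport (bspline_hasCompactSupport (n + 1))
    refine ⟨hint, ?_⟩
    have hF := hint.continuous_primitive 0
    have : bspline (n + 2) = fun x => (∫ t in (0:ℝ)..(x + 1/2), bspline (n+1) t)
        - ∫ t in (0:ℝ)..(x - 1/2), bspline (n+1) t := by
      funext x
      rw [bspline_succ_eq, intervalIntegral.integral_interval_sub_left
        hint.intervalIntegrable hint.intervalIntegrable]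
    rw [this]
    exact (hF.comp (continuous_id.add continuous_const)).sub
      (hF.comp (continuous_id.sub continuous_const))

lemma bspline_contDiff_aux : ∀ n : ℕ, ContDiff ℝ (n : ℕ∞) (bspline (n + 1)) := by
  intro n
  induction n with
  | zero =>
    exact contDiff_zero.mpr (bspline_integrable_continuous 0).2
  | succ n ih =>
    have hcont : Continuous (bspline (n + 1)) := (bspline_integrable_continuous n).2
    have hint : Integrable (bspline (n + 1)) :=
      hcont.integrable_of_hasCompactSupport (bspline_hasCompactSupport (n + 1))
    set F : ℝ → ℝ := fun b => ∫ t in (0:ℝ)..b, bspline (n+1) t with hFdef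
    have hderiv : ∀ x : ℝ, HasDerivAt F (bspline (n+1) x) x := fun x =>
      intervalIntegral.integral_hasDerivAt_right hint.intervalIntegrable
        hcont.stronglyMeasurable.stronglyMeasurableAtFilter hcont.continuousAt
    have hF : ContDiff ℝ ((n + 1 : ℕ) : ℕ∞) F := by
      rw [show (((n + 1 : ℕ) : ℕ∞) : WithTop ℕ∞) = (n : ℕ∞) + 1 by push_cast; rfl,
        contDiff_succ_iff_deriv]
      refine ⟨fun x => (hderiv x).differentiableAt, by simp, ?_⟩
      have : deriv F = bspline (n + 1) := funext fun x => (hderiv x).deriv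
      rw [this]; exact ih
    have heq : bspline (n + 2) = fun x => F (x + 1/2) - F (x - 1/2) := by
      funext x
      rw [bspline_succ_eq, hFdef]
      exact (intervalIntegral.integral_interval_sub_left
        hint.intervalIntegrable hint.intervalIntegrable).symm
    rw [heq]
    exact (hF.comp (contDiff_id.add contDiff_const)).sub
      (hF.comp (contDiff_id.sub contDiff_const))

/-- For `n ≥ 1`, the centered cardinal B-spline `bspline n` is of class `C^{n-1}` on `ℝ`. -/
theorem bspline_contDiff (n : ℕ) (hn : 1 ≤ n) :
    ContDiff ℝ ((n - 1 : ℕ) : ℕ∞) (bspline n) := by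
  obtain ⟨m, rfl⟩ := Nat.exists_eq_add_of_le' hn
  simpa using bspline_contDiff_aux m
end

section
/- The centered cardinal B-splines satisfy the convolution semigroup identity: for all natural numbers m and n, φ_m * φ_n = φ_{m+n+1}, where * denotes convolution with respect to Lebesgue measure on ℝ. -/
open MeasureTheory

lemma bspline_succ (n : ℕ) (x : ℝ) :
    bspline (n+1) x = ∫ t in (x - 1/2)..(x + 1/2), bspline n t := by
  show (∫ y in (-(1/2):ℝ)..(1/2), bspline n (x - y)) = _
  rw [intervalIntegral.integral_comp_sub_left (bspline n) x]
  norm_num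

lemma bspline_nonneg (n : ℕ) (x : ℝ) : 0 ≤ bspline n x := by
  induction n generalizing x with
  | zero => exact Set.indicator_nonneg (fun _ _ => zero_le_one) x
  | succ n ih =>
    show 0 ≤ ∫ y in (-(1/2):ℝ)..(1/2), bspline n (x - y)
    exact intervalIntegral.integral_nonneg (by norm_num) (fun u _ => ih _)

lemma bspline_zero_of (n : ℕ) (x : ℝ) (hx : ((n:ℝ)+1)/2 ≤ |x|) : bspline n x = 0 := by
  induction n generalizing x with
  | zero =>
    apply Set.indicator_of_notMem
    intro h
    rw [Set.mem_Ioo] at h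
    cases abs_cases x with
    | inl h' => norm_num at hx; linarith [h.2, h'.1]
    | inr h' => norm_num at hx; linarith [h.1, h'.1]
  | succ n ih =>
    show (∫ y in (-(1/2):ℝ)..(1/2), bspline n (x - y)) = 0
    rw [intervalIntegral.integral_congr (g := fun _ => 0)]
    · simp
    · intro y hy
      rw [Set.uIcc_of_le (by norm_num : (-(1/2):ℝ) ≤ 1/2), Set.mem_Icc] at hy
      apply ih
      push_cast at hx ⊢
      have h1 : |x| - |y| ≤ |x - y| := abs_sub_abs_le_abs_sub x y
      have h2 : |y| ≤ 1/2 := abs_le.mpr ⟨hy.1, hy.2⟩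
      linarith

lemma continuous_bspline_aux {n : ℕ} (h : Integrable (bspline n)) :
    Continuous (bspline (n+1)) := by
  have hc : Continuous fun u : ℝ => ∫ t in (0:ℝ)..u, bspline n t :=
    intervalIntegral.continuous_primitive (fun a b => h.intervalIntegrable) 0
  have : bspline (n+1) = fun x =>
      (∫ t in (0:ℝ)..(x + 1/2), bspline n t) - ∫ t in (0:ℝ)..(x - 1/2), bspline n t := by
    funext x
    rw [bspline_succ, intervalIntegral.integral_interval_sub_left
      h.intervalIntegrable h.intervalIntegrable]
  rw [this]
  exact (hc.comp (continuous_id.add continuous_const)).sub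
    (hc.comp (continuous_id.sub continuous_const))

lemma integrable_bspline (n : ℕ) : Integrable (bspline n) := by
  induction n with
  | zero =>
    refine (integrable_indicator_iff measurableSet_Ioo).mpr ?_
    exact (integrableOn_const_iff).mpr (Or.inr (by simp))
  | succ n ih =>
    apply (continuous_bspline_aux ih).integrable_of_hasCompactSupport
    apply HasCompactSupport.intro (isCompact_Icc (a := -(((n:ℝ)+2)/2)) (b := ((n:ℝ)+2)/2))
    intro x hx
    apply bspline_zero_of
    rw [Set.mem_Icc, not_and_or] at hx
    push_cast
    have hn : (0:ℝ) ≤ (n:ℝ) := Nat.cast_nonneg n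
    rcases hx with h | h
    · push_neg at h
      rw [abs_of_neg (by linarith)]
      linarith
    · push_neg at h
      rw [abs_of_pos (by linarith)]
      linarith

lemma measurable_bspline (n : ℕ) : Measurable (bspline n) := by
  cases n with
  | zero => exact (measurable_const.indicator measurableSet_Ioo)
  | succ n => exact (continuous_bspline_aux (integrable_bspline n)).measurable

lemma bspline_le_one (n : ℕ) (x : ℝ) : bspline n x ≤ 1 := by
  cases n with
  | zero => exact Set.indicator_le_self' (fun _ _ => zero_le_one) x
  | succ n =>
    rw [bspline_succ]
    calc (∫ t in (x - 1/2)..(x + 1/2), bspline n t)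
        ≤ ∫ _ in (x - 1/2)..(x + 1/2), (1:ℝ) := by
          apply intervalIntegral.integral_mono_on (by linarith)
            (integrable_bspline n).intervalIntegrable intervalIntegrable_const
          exact fun t _ => bspline_le_one n t
      _ = 1 := by simp; norm_num

/-- Convolution semigroup identity for the centered cardinal B-splines:
`φ_m * φ_n = φ_{m+n+1}` with respect to Lebesgue measure. -/
theorem bspline_convolution (m n : ℕ) :
    ∀ x : ℝ, (∫ y : ℝ, bspline m y * bspline n (x - y)) = bspline (m + n + 1) x := by
  induction n with
  | zero =>
    intro x
    have h1 : (fun y => bspline m y * bspline 0 (x - y))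
        = Set.indicator (Set.Ioo (x - 1/2) (x + 1/2)) (bspline m) := by
      funext y
      show bspline m y * Set.indicator _ _ (x - y) = _
      by_cases hy : y ∈ Set.Ioo (x - 1/2) (x + 1/2)
      · rw [Set.indicator_of_mem hy]
        rw [Set.mem_Ioo] at hy
        have : x - y ∈ Set.Ioo (-(1/2):ℝ) (1/2) := ⟨by linarith [hy.2], by linarith [hy.1]⟩
        rw [Set.indicator_of_mem this]; ring
      · rw [Set.indicator_of_notMem hy]
        have : x - y ∉ Set.Ioo (-(1/2):ℝ) (1/2) := by
          intro h
          rw [Set.mem_Ioo] at h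
          exact hy ⟨by linarith [h.2], by linarith [h.1]⟩
        rw [Set.indicator_of_notMem this, mul_zero]
    rw [h1, integral_indicator measurableSet_Ioo, ← integral_Ioc_eq_integral_Ioo,
        ← intervalIntegral.integral_of_le (by linarith : x - 1/2 ≤ x + 1/2), ← bspline_succ]
  | succ n ih =>
    intro x
    have hIoc : (volume (Set.Ioc (-(1/2):ℝ) (1/2))) < ⊤ := by simp
    have hint : Integrable (fun z : ℝ × ℝ => bspline m z.1 * bspline n (x - z.1 - z.2))
        (volume.prod (volume.restrict (Set.Ioc (-(1/2):ℝ) (1/2)))) := by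
      apply Integrable.mono' ((integrable_bspline m).mul_prod (integrable_const 1))
      · exact (((measurable_bspline m).comp measurable_fst).mul
          ((measurable_bspline n).comp (by fun_prop))).aestronglyMeasurable
      · filter_upwards with z
        rw [Real.norm_eq_abs, abs_of_nonneg (mul_nonneg (bspline_nonneg _ _) (bspline_nonneg _ _))]
        exact mul_le_mul_of_nonneg_left (bspline_le_one _ _) (bspline_nonneg _ _)
    calc (∫ y : ℝ, bspline m y * bspline (n+1) (x - y))
        = ∫ y : ℝ, ∫ t in Set.Ioc (-(1/2):ℝ) (1/2), bspline m y * bspline n (x - y - t) := by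
          congr 1; funext y
          show bspline m y * (∫ t in (-(1/2):ℝ)..(1/2), bspline n (x - y - t)) = _
          rw [intervalIntegral.integral_of_le (by norm_num), ← integral_const_mul]
      _ = ∫ t in Set.Ioc (-(1/2):ℝ) (1/2), ∫ y : ℝ, bspline m y * bspline n (x - y - t) :=
          integral_integral_swap hint
      _ = ∫ t in Set.Ioc (-(1/2):ℝ) (1/2), bspline (m + n + 1) (x - t) := by
          apply setIntegral_congr_fun measurableSet_Ioc
          intro t _
          show (∫ y : ℝ, bspline m y * bspline n (x - y - t)) = bspline (m + n + 1) (x - t)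
          rw [← ih (x - t)]
          congr 1; funext y; rw [sub_right_comm]
      _ = bspline (m + (n+1) + 1) x := by
          rw [← intervalIntegral.integral_of_le (by norm_num : (-(1/2):ℝ) ≤ 1/2)]
          show _ = bspline (m + n + 1 + 1) x
          rfl
end
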